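/- arXiv:2310.11337 — 2 statements merged into one kernel-verified Lean document; each statement's English description precedes it below -/
import Mathlib

section
/- Northcott's theorem with bounded degree: for every d ∈ ℕ and X ≥ 1, the set of algebraic numbers α with [ℚ(α):ℚ] ≤ d and H(α) ≤ X is finite. Equivalently, the set {α ∈ ℚ̄ : [ℚ(α):ℚ] ≤ d} has the Northcott property. -/
open Polynomial NumberField

/-- The primitive integer minimal polynomial of an algebraic number `α`. -/
noncomputable def intMinpoly {A : Type*} [Field A] [CharZero A] (α : A) : Polynomial ℤ :=
  (IsLocalization.integerNormalization (nonZeroDivisors ℤ) (minpoly ℚ α)).primPart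

/-- The absolute multiplicative Weil height of an algebraic number `α`, computed via the
Mahler-measure formula `H(α)^[ℚ(α):ℚ] = |a_d| ∏_i max(1,|α_i|)`, where `a_d` is the leading
coefficient of the primitive integer minimal polynomial of `α` and the `α_i` are its complex
roots. -/
noncomputable def algHeight {A : Type*} [Field A] [CharZero A] (α : A) : ℝ :=
  ((|(intMinpoly α).leadingCoeff| : ℝ) *
      (((intMinpoly α).aroots ℂ).map fun z => max 1 ‖z‖).prod) ^
    (((minpoly ℚ α).natDegree : ℝ))⁻¹

/-- A set `S` of algebraic numbers has the Northcott property if for every `X ≥ 1` the set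
of elements of `S` of height at most `X` is finite. -/
def NorthcottProp {A : Type*} [Field A] [CharZero A] (S : Set A) : Prop :=
  ∀ X : ℝ, 1 ≤ X → {α ∈ S | algHeight α ≤ X}.Finite

lemma intNorm_ne_zero (α : AlgebraicClosure ℚ) :
    IsLocalization.integerNormalization (nonZeroDivisors ℤ) (minpoly ℚ α) ≠ 0 := by
  rw [Ne, IsFractionRing.integerNormalization_eq_zero_iff]
  exact minpoly.ne_zero (isAlgebraic_iff_isIntegral.1 ((AlgebraicClosure.isAlgebraic ℚ).isAlgebraic α))

lemma intMinpoly_ne_zero (α : AlgebraicClosure ℚ) : intMinpoly α ≠ 0 :=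
  Polynomial.primPart_ne_zero _

lemma intMinpoly_natDegree (α : AlgebraicClosure ℚ) :
    (intMinpoly α).natDegree = (minpoly ℚ α).natDegree := by
  unfold intMinpoly
  rw [natDegree_primPart]
  obtain ⟨b, hb⟩ :=
    IsLocalization.integerNormalization_map_to_map (nonZeroDivisors ℤ) (minpoly ℚ α)
  have hb0 : ((b : ℤ) : ℚ) ≠ 0 := by
    exact_mod_cast nonZeroDivisors.coe_ne_zero b
  have := congrArg natDegree hb
  rwa [natDegree_map_eq_of_injective (algebraMap ℤ ℚ).injective_int, zsmul_eq_mul,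
    ← C_eq_intCast, natDegree_C_mul hb0] at this

lemma aeval_intMinpoly (α : AlgebraicClosure ℚ) : aeval α (intMinpoly α) = 0 := by
  unfold intMinpoly
  apply Polynomial.aeval_primPart_eq_zero (intNorm_ne_zero α)
  exact IsLocalization.integerNormalization_aeval_eq_zero _ _ (minpoly.aeval ℚ α)

lemma one_le_multiset_prod {s : Multiset ℝ} (h : ∀ x ∈ s, 1 ≤ x) : 1 ≤ s.prod := by
  induction s using Multiset.induction with
  | empty => simp
  | cons a s ih =>
    simp only [Multiset.prod_cons]
    have ha := h a (Multiset.mem_cons_self a s)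
    have hs := ih fun x hx => h x (Multiset.mem_cons_of_mem hx)
    nlinarith

lemma single_le_multiset_prod {s : Multiset ℝ} (h : ∀ x ∈ s, 1 ≤ x) :
    ∀ x ∈ s, x ≤ s.prod := by
  induction s using Multiset.induction with
  | empty => simp
  | cons a s ih =>
    intro x hx
    simp only [Multiset.prod_cons]
    have ha := h a (Multiset.mem_cons_self a s)
    have hs := one_le_multiset_prod fun y hy => h y (Multiset.mem_cons_of_mem hy)
    rcases Multiset.mem_cons.1 hx with rfl | hx
    · nlinarith
    · have := ih (fun y hy => h y (Multiset.mem_cons_of_mem hy)) x hx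
      have hx1 := h x (Multiset.mem_cons_of_mem hx)
      nlinarith

lemma intMinpoly_coeff_bound {d : ℕ} {X : ℝ} (hX : 1 ≤ X) (α : AlgebraicClosure ℚ)
    (hd : (minpoly ℚ α).natDegree ≤ d) (hH : algHeight α ≤ X) (i : ℕ) :
    (|(intMinpoly α).coeff i| : ℝ) ≤ X ^ d * (max (X ^ d) 1 ^ d * (d.choose (d / 2) : ℝ)) := by
  set p := intMinpoly α with hp
  set n := (minpoly ℚ α).natDegree with hn
  have hn0 : 0 < n := minpoly.natDegree_pos (isAlgebraic_iff_isIntegral.1 ((AlgebraicClosure.isAlgebraic ℚ).isAlgebraic α))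
  have hp0 : p ≠ 0 := intMinpoly_ne_zero α
  have hpn : p.natDegree = n := intMinpoly_natDegree α
  have hlc : p.leadingCoeff ≠ 0 := leadingCoeff_ne_zero.2 hp0
  have hlc1 : (1 : ℝ) ≤ (|p.leadingCoeff| : ℝ) := by
    exact_mod_cast Int.one_le_abs hlc
  set P : ℝ := ((p.aroots ℂ).map fun z => max 1 ‖z‖).prod with hP
  have hP1 : (1 : ℝ) ≤ P := by
    apply one_le_multiset_prod
    intro x hx
    obtain ⟨z, _, rfl⟩ := Multiset.mem_map.1 hx
    exact le_max_left _ _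
  set M : ℝ := (|p.leadingCoeff| : ℝ) * P with hM
  have hM1 : (1 : ℝ) ≤ M := one_le_mul_of_one_le_of_one_le hlc1 hP1
  have hMX : M ≤ X ^ d := by
    have hHM : algHeight α = M ^ ((n : ℝ))⁻¹ := rfl
    have hMeq : (M ^ ((n : ℝ))⁻¹) ^ n = M := by
      rw [← Real.rpow_natCast (M ^ _) n, ← Real.rpow_mul (by linarith),
        inv_mul_cancel₀ (by exact_mod_cast hn0.ne'), Real.rpow_one]
    calc M = (M ^ ((n : ℝ))⁻¹) ^ n := hMeq.symm
      _ ≤ X ^ n := by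
          apply pow_le_pow_left₀ (Real.rpow_nonneg (by linarith) _)
          rw [← hHM]; exact hH
      _ ≤ X ^ d := pow_le_pow_right₀ hX hd
  have hroot_bound : ∀ z ∈ p.aroots ℂ, ‖z‖ ≤ X ^ d := by
    intro z hz
    have h1 : max 1 ‖z‖ ≤ P :=
      single_le_multiset_prod (fun x hx => by
        obtain ⟨w, _, rfl⟩ := Multiset.mem_map.1 hx; exact le_max_left _ _) _
        (Multiset.mem_map_of_mem _ hz)
    calc ‖z‖ ≤ max 1 ‖z‖ := le_max_right _ _
      _ ≤ P := h1
      _ ≤ M := le_mul_of_one_le_left (by linarith) hlc1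
      _ ≤ X ^ d := hMX
  have hlcX : (|p.leadingCoeff| : ℝ) ≤ X ^ d :=
    (le_mul_of_one_le_right (by linarith) hP1).trans hMX
  -- work over ℂ
  set q : Polynomial ℂ := p.map (algebraMap ℤ ℂ) with hq
  have hinj : Function.Injective (algebraMap ℤ ℂ) := (algebraMap ℤ ℂ).injective_int
  have hq0 : q ≠ 0 := (Polynomial.map_ne_zero_iff hinj).2 hp0
  have hsplits : q.Splits := IsAlgClosed.splits q
  have hcard : Multiset.card q.roots = q.natDegree := (splits_iff_card_roots).1 hsplits
  set r : Polynomial ℂ := (q.roots.map fun a => Polynomial.X - C a).prod with hr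
  have hr_monic : r.Monic := monic_multiset_prod_of_monic _ _ fun a _ => monic_X_sub_C a
  have hfact : C q.leadingCoeff * r = q := C_leadingCoeff_mul_prod_multiset_X_sub_C hcard
  have hr_deg : r.natDegree ≤ d := by
    rw [hr, natDegree_multiset_prod_X_sub_C_eq_card, hcard,
      natDegree_map_eq_of_injective hinj, hpn]
    exact hd
  have hq_aroots : p.aroots ℂ = q.roots := rfl
  have hr_coeff : ∀ j, ‖r.coeff j‖ ≤ max (X ^ d) 1 ^ d * (d.choose (d / 2) : ℝ) := by
    intro j
    have := coeff_bdd_of_roots_le (RingHom.id ℂ) hr_monic (by rw [map_id]; exact IsAlgClosed.splits r) hr_deg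
      (fun z hz => by
        rw [map_id] at hz
        rw [hr, roots_multiset_prod_X_sub_C] at hz
        exact hroot_bound z (hq_aroots ▸ hz)) j
    rwa [map_id] at this
  have hqlc : ‖q.leadingCoeff‖ = (|p.leadingCoeff| : ℝ) := by
    rw [hq, leadingCoeff_map_of_injective hinj]
    simp
  have hqcoeff : q.coeff i = q.leadingCoeff * r.coeff i := by
    conv_lhs => rw [← hfact]
    rw [coeff_C_mul]
  have hnorm : (|p.coeff i| : ℝ) = ‖q.coeff i‖ := by
    rw [hq, coeff_map]
    simp
  rw [hnorm, hqcoeff, norm_mul, hqlc]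
  exact mul_le_mul hlcX (hr_coeff i) (norm_nonneg _) (by positivity)

/-- Northcott's theorem with bounded degree: for every `d ∈ ℕ` and `X ≥ 1`, the
set of algebraic numbers `α` with `[ℚ(α):ℚ] ≤ d` and `H(α) ≤ X` is finite; equivalently,
`{α ∈ ℚ̄ : [ℚ(α):ℚ] ≤ d}` has the Northcott property. -/
theorem northcott_bounded_degree (d : ℕ) :
    (∀ X : ℝ, 1 ≤ X →
      {α : AlgebraicClosure ℚ | (minpoly ℚ α).natDegree ≤ d ∧ algHeight α ≤ X}.Finite) ∧
    NorthcottProp {α : AlgebraicClosure ℚ | (minpoly ℚ α).natDegree ≤ d} := by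
  have key : ∀ X : ℝ, 1 ≤ X →
      {α : AlgebraicClosure ℚ | (minpoly ℚ α).natDegree ≤ d ∧ algHeight α ≤ X}.Finite := by
    intro X hX
    classical
    set B : ℝ := X ^ d * (max (X ^ d) 1 ^ d * (d.choose (d / 2) : ℝ)) with hB
    have hU : ({m : ℤ | (|m| : ℝ) ≤ B}).Finite := by
      apply (Set.finite_Icc (-⌈B⌉) ⌈B⌉).subset
      intro m hm
      simp only [Set.mem_setOf_eq] at hm
      have h1 : (|m| : ℝ) ≤ (⌈B⌉ : ℝ) := hm.trans (Int.le_ceil B)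
      have h2 : |m| ≤ ⌈B⌉ := by exact_mod_cast h1
      exact Set.mem_Icc.2 (abs_le.1 h2)
    apply (Polynomial.bUnion_roots_finite (algebraMap ℤ (AlgebraicClosure ℚ)) d hU).subset
    rintro α ⟨hdeg, hH⟩
    simp only [Set.mem_iUnion]
    refine ⟨intMinpoly α, ⟨?_, fun i => intMinpoly_coeff_bound hX α hdeg hH i⟩, ?_⟩
    · rw [intMinpoly_natDegree]; exact hdeg
    · have hmap0 : (intMinpoly α).map (algebraMap ℤ (AlgebraicClosure ℚ)) ≠ 0 :=
        (Polynomial.map_ne_zero_iff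
          (algebraMap ℤ (AlgebraicClosure ℚ)).injective_int).2 (intMinpoly_ne_zero α)
      have hroot : IsRoot ((intMinpoly α).map (algebraMap ℤ (AlgebraicClosure ℚ))) α := by
        rw [IsRoot, eval_map, ← aeval_def]
        exact aeval_intMinpoly α
      simp only [Finset.coe_sort_coe, Multiset.mem_toFinset, Finset.mem_coe]
      exact (mem_roots hmap0).2 hroot
  exact ⟨key, key⟩
end

section
/- If K₁ and K₂ are finite Galois extensions of a field K inside a fixed algebraic closure, then the map σ ↦ (σ|_{K₁}, σ|_{K₂}) is an injective group homomorphism from Gal(K₁K₂/K) into Gal(K₁/K) × Gal(K₂/K). Consequently, if M/K is a finite Galois extension contained in the compositum K^{(d)} of all extensions of K of degree at most d, then the exponent of Gal(M/K) divides d!, and no prime p > d divides the order of Gal(M/K). -/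
set_option maxHeartbeats 1000000
set_option synthInstance.maxHeartbeats 400000

/-- `K^{(d)}`: the compositum inside a fixed algebraic closure of all extensions of `K` of
degree at most `d`. -/
noncomputable def compositumDeg' (K : Type*) [Field K] (d : ℕ) :
    IntermediateField K (AlgebraicClosure K) :=
  ⨆ E ∈ {E : IntermediateField K (AlgebraicClosure K) |
    FiniteDimensional K ↥E ∧ Module.finrank K ↥E ≤ d}, E

section Aux

open IntermediateField

variable {K : Type*} [Field K]

/-- An automorphism of `T` fixing a generating subset pointwise is the identity. -/
private theorem aux_fix {L : Type*} [Field L] [Algebra K L]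
    {T : IntermediateField K L} (σ : ↥T ≃ₐ[K] ↥T) {S : Set L}
    (hST : ∀ x ∈ S, x ∈ T)
    (hTS : T ≤ IntermediateField.adjoin K S)
    (hfix : ∀ x (hx : x ∈ S), σ ⟨x, hST x hx⟩ = ⟨x, hST x hx⟩) : σ = 1 := by
  classical
  let g : ↥T →ₐ[K] L := T.val.comp σ.toAlgHom
  have hinv : ∀ x ∈ AlgHom.equalizer g T.val, x⁻¹ ∈ AlgHom.equalizer g T.val := by
    intro x hx
    have hx' : g x = T.val x := hx
    show g x⁻¹ = T.val x⁻¹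
    rw [map_inv₀, map_inv₀, hx']
  let EqF : IntermediateField K ↥T := Subalgebra.toIntermediateField _ hinv
  have hF : T ≤ EqF.map T.val := by
    refine le_trans hTS (IntermediateField.adjoin_le_iff.mpr ?_)
    intro x hx
    refine ⟨⟨x, hST x hx⟩, ?_, rfl⟩
    show (σ ⟨x, hST x hx⟩ : L) = (⟨x, hST x hx⟩ : ↥T)
    rw [hfix x hx]
  ext y
  obtain ⟨z, hz, hzy⟩ := hF y.2
  have hz' : z = y := Subtype.ext hzy
  subst hz'
  have hzz : (σ z : L) = (z : L) := hz
  exact hzz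

private theorem aux_restrict (L : Type*) [Field L] [Algebra K L]
    (K₁ K₂ : IntermediateField K L) [Normal K ↥K₁] [Normal K ↥K₂] :
    ∃ φ : (↥(K₁ ⊔ K₂) ≃ₐ[K] ↥(K₁ ⊔ K₂)) →* (↥K₁ ≃ₐ[K] ↥K₁) × (↥K₂ ≃ₐ[K] ↥K₂),
      Function.Injective φ ∧
      (∀ (σ : ↥(K₁ ⊔ K₂) ≃ₐ[K] ↥(K₁ ⊔ K₂)) (x : ↥K₁),
        ((((φ σ).1 x : ↥K₁) : L) =
          ((σ (IntermediateField.inclusion le_sup_left x) : ↥(K₁ ⊔ K₂)) : L))) ∧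
      (∀ (σ : ↥(K₁ ⊔ K₂) ≃ₐ[K] ↥(K₁ ⊔ K₂)) (x : ↥K₂),
        ((((φ σ).2 x : ↥K₂) : L) =
          ((σ (IntermediateField.inclusion le_sup_right x) : ↥(K₁ ⊔ K₂)) : L))) := by
  letI : Algebra ↥K₁ ↥(K₁ ⊔ K₂) := (IntermediateField.inclusion le_sup_left).toAlgebra
  letI : Algebra ↥K₂ ↥(K₁ ⊔ K₂) := (IntermediateField.inclusion le_sup_right).toAlgebra
  haveI : IsScalarTower K ↥K₁ ↥(K₁ ⊔ K₂) :=
    IsScalarTower.of_algebraMap_eq (R := K) (S := ↥K₁) (A := ↥(K₁ ⊔ K₂))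
      fun x => Subtype.ext rfl
  haveI : IsScalarTower K ↥K₂ ↥(K₁ ⊔ K₂) :=
    IsScalarTower.of_algebraMap_eq (R := K) (S := ↥K₂) (A := ↥(K₁ ⊔ K₂))
      fun x => Subtype.ext rfl
  have com1 : ∀ (σ : ↥(K₁ ⊔ K₂) ≃ₐ[K] ↥(K₁ ⊔ K₂)) (x : ↥K₁),
      (((AlgEquiv.restrictNormalHom (F := K) (K₁ := ↥(K₁ ⊔ K₂)) ↥K₁ σ) x : ↥K₁) : L) =
        ((σ (IntermediateField.inclusion le_sup_left x) : ↥(K₁ ⊔ K₂)) : L) := by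
    intro σ x
    have h := AlgEquiv.restrictNormal_commutes σ ↥K₁ x
    exact congrArg (fun z : ↥(K₁ ⊔ K₂) => (z : L)) h
  have com2 : ∀ (σ : ↥(K₁ ⊔ K₂) ≃ₐ[K] ↥(K₁ ⊔ K₂)) (x : ↥K₂),
      (((AlgEquiv.restrictNormalHom (F := K) (K₁ := ↥(K₁ ⊔ K₂)) ↥K₂ σ) x : ↥K₂) : L) =
        ((σ (IntermediateField.inclusion le_sup_right x) : ↥(K₁ ⊔ K₂)) : L) := by
    intro σ x
    have h := AlgEquiv.restrictNormal_commutes σ ↥K₂ x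
    exact congrArg (fun z : ↥(K₁ ⊔ K₂) => (z : L)) h
  refine ⟨(AlgEquiv.restrictNormalHom ↥K₁).prod (AlgEquiv.restrictNormalHom ↥K₂),
    ?_, com1, com2⟩
  rw [injective_iff_map_eq_one]
  intro σ hσ
  have h1 : AlgEquiv.restrictNormalHom (F := K) (K₁ := ↥(K₁ ⊔ K₂)) ↥K₁ σ = 1 :=
    congrArg Prod.fst hσ
  have h2 : AlgEquiv.restrictNormalHom (F := K) (K₁ := ↥(K₁ ⊔ K₂)) ↥K₂ σ = 1 :=
    congrArg Prod.snd hσ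
  have hST : ∀ x ∈ (K₁ : Set L) ∪ (K₂ : Set L), x ∈ K₁ ⊔ K₂ := by
    rintro x (hx | hx)
    · exact (le_sup_left : K₁ ≤ K₁ ⊔ K₂) hx
    · exact (le_sup_right : K₂ ≤ K₁ ⊔ K₂) hx
  refine aux_fix σ hST ?_ ?_
  · refine sup_le ?_ ?_
    · intro x hx
      exact IntermediateField.subset_adjoin _ _ (Set.mem_union_left _ hx)
    · intro x hx
      exact IntermediateField.subset_adjoin _ _ (Set.mem_union_right _ hx)
  · rintro x (hx | hx)
    · have e := com1 σ ⟨x, hx⟩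
      rw [h1] at e
      have hi : IntermediateField.inclusion le_sup_left (⟨x, hx⟩ : ↥K₁) =
          (⟨x, hST x (Or.inl hx)⟩ : ↥(K₁ ⊔ K₂)) := Subtype.ext rfl
      rw [hi] at e
      exact Subtype.ext e.symm
    · have e := com2 σ ⟨x, hx⟩
      rw [h2] at e
      have hi : IntermediateField.inclusion le_sup_right (⟨x, hx⟩ : ↥K₂) =
          (⟨x, hST x (Or.inr hx)⟩ : ↥(K₁ ⊔ K₂)) := Subtype.ext rfl
      rw [hi] at e
      exact Subtype.ext e.symm

private theorem aux_nc_card (d : ℕ) (E : IntermediateField K (AlgebraicClosure K))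
    [FiniteDimensional K ↥E] (hd : Module.finrank K ↥E ≤ d) :
    Nat.card (↥(normalClosure K ↥E (AlgebraicClosure K)) ≃ₐ[K]
      ↥(normalClosure K ↥E (AlgebraicClosure K))) ∣ d.factorial := by
  classical
  set N := normalClosure K ↥E (AlgebraicClosure K) with hN
  let act : (↥N ≃ₐ[K] ↥N) →* Equiv.Perm (↥E →ₐ[K] ↥N) :=
  { toFun := fun σ =>
      { toFun := fun f => σ.toAlgHom.comp f
        invFun := fun f => σ.symm.toAlgHom.comp f
        left_inv := fun f => by ext x; simp
        right_inv := fun f => by ext x; simp }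
    map_one' := by
      refine Equiv.ext fun f => AlgHom.ext fun x => ?_
      simp
    map_mul' := fun σ τ => by
      refine Equiv.ext fun f => AlgHom.ext fun x => ?_
      simp }
  have hinj : Function.Injective act := by
    rw [injective_iff_map_eq_one]
    intro σ hσ
    have hfixhom : ∀ f : ↥E →ₐ[K] ↥N, σ.toAlgHom.comp f = f := by
      intro f
      exact congrArg (fun e : Equiv.Perm (↥E →ₐ[K] ↥N) => e f) hσ
    have hST : ∀ x ∈ ⋃ f : ↥E →ₐ[K] AlgebraicClosure K,
        (f.fieldRange : Set (AlgebraicClosure K)), x ∈ N := by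
      intro x hx
      obtain ⟨f, hf⟩ := Set.mem_iUnion.mp hx
      exact f.fieldRange_le_normalClosure hf
    refine aux_fix σ hST ?_ ?_
    · refine normalClosure_le_iff.mpr fun f => ?_
      intro x hx
      exact IntermediateField.subset_adjoin _ _ (Set.mem_iUnion.mpr ⟨f, hx⟩)
    · intro x hx
      obtain ⟨f, hf⟩ := Set.mem_iUnion.mp hx
      obtain ⟨y, hy⟩ := hf
      let fN : ↥E →ₐ[K] ↥N := (normalClosure.algHomEquiv K ↥E (AlgebraicClosure K)).symm f
      have h1 : (⟨x, hST x hx⟩ : ↥N) = fN y := Subtype.ext hy.symm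
      have h2 : σ (fN y) = fN y := DFunLike.congr_fun (hfixhom fN) y
      rw [h1]
      exact h2
  have hdvd := Subgroup.card_dvd_of_injective act hinj
  letI : Fintype (↥E →ₐ[K] ↥N) := Fintype.ofFinite _
  have hm : Nat.card (↥E →ₐ[K] ↥N) ≤ d := by
    haveI : Algebra.IsAlgebraic K ↥E := Algebra.IsAlgebraic.of_finite K ↥E
    have h1 : Nat.card (↥E →ₐ[K] ↥N) = Nat.card (↥E →ₐ[K] AlgebraicClosure K) :=
      Nat.card_congr (normalClosure.algHomEquiv K ↥E (AlgebraicClosure K))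
    rw [h1, ← Field.finSepDegree_eq_of_isAlgClosed]
    exact le_trans (Field.finSepDegree_le_finrank K ↥E) hd
  have hperm : Nat.card (Equiv.Perm (↥E →ₐ[K] ↥N)) =
      (Nat.card (↥E →ₐ[K] ↥N)).factorial := by
    rw [Nat.card_eq_fintype_card, Nat.card_eq_fintype_card, Fintype.card_perm]
  rw [hperm] at hdvd
  exact hdvd.trans (Nat.factorial_dvd_factorial hm)

private def GoodAux (K : Type*) [Field K] (d : ℕ) (L : Type*) [Field L] [Algebra K L]
    (F : IntermediateField K L) : Prop :=
  FiniteDimensional K ↥F ∧ Normal K ↥F ∧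
    Monoid.exponent (↥F ≃ₐ[K] ↥F) ∣ d.factorial ∧
    ∀ p : ℕ, p.Prime → d < p → ¬ p ∣ Nat.card (↥F ≃ₐ[K] ↥F)

private theorem aux_good_bot (d : ℕ) (L : Type*) [Field L] [Algebra K L] :
    GoodAux K d L (⊥ : IntermediateField K L) := by
  haveI : Normal K ↥(⊥ : IntermediateField K L) :=
    Normal.of_algEquiv (IntermediateField.botEquiv K L).symm
  have hsub : Subsingleton (↥(⊥ : IntermediateField K L) ≃ₐ[K] ↥(⊥ : IntermediateField K L)) := by
    constructor
    intro σ τ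
    ext x
    obtain ⟨k, hk⟩ := IntermediateField.mem_bot.mp x.2
    have hx : x = algebraMap K ↥(⊥ : IntermediateField K L) k := Subtype.ext hk.symm
    rw [hx, AlgEquiv.commutes, AlgEquiv.commutes]
  have hcard : Nat.card (↥(⊥ : IntermediateField K L) ≃ₐ[K] ↥(⊥ : IntermediateField K L)) = 1 :=
    Nat.card_eq_one_iff_unique.mpr ⟨hsub, ⟨1⟩⟩
  refine ⟨inferInstance, inferInstance, ?_, ?_⟩
  · have h := Group.exponent_dvd_nat_card
      (G := ↥(⊥ : IntermediateField K L) ≃ₐ[K] ↥(⊥ : IntermediateField K L))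
    rw [hcard] at h
    exact h.trans (one_dvd _)
  · intro p hp hdp hpd
    rw [hcard, Nat.dvd_one] at hpd
    exact hp.one_lt.ne' hpd

private theorem aux_good_sup (d : ℕ) (L : Type*) [Field L] [Algebra K L]
    (F F' : IntermediateField K L) (h : GoodAux K d L F) (h' : GoodAux K d L F') :
    GoodAux K d L (F ⊔ F') := by
  obtain ⟨hfd, hn, he, hp⟩ := h
  obtain ⟨hfd', hn', he', hp'⟩ := h'
  haveI := hfd; haveI := hn; haveI := hfd'; haveI := hn'
  obtain ⟨φ, hinj, -, -⟩ := aux_restrict L F F'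
  refine ⟨inferInstance, inferInstance, ?_, ?_⟩
  · have h1 : Monoid.exponent (↥(F ⊔ F') ≃ₐ[K] ↥(F ⊔ F')) ∣
        Monoid.exponent ((↥F ≃ₐ[K] ↥F) × (↥F' ≃ₐ[K] ↥F')) := by
      apply Monoid.exponent_dvd_of_forall_pow_eq_one
      intro g
      apply hinj
      rw [map_pow, map_one]
      exact Monoid.pow_exponent_eq_one (φ g)
    rw [Monoid.exponent_prod] at h1
    exact h1.trans (Nat.lcm_dvd he he')
  · intro p hp0 hdp hdvd
    have hc := Subgroup.card_dvd_of_injective φ hinj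
    rw [Nat.card_prod] at hc
    rcases (Nat.Prime.dvd_mul hp0).mp (hdvd.trans hc) with h | h
    · exact hp p hp0 hdp h
    · exact hp' p hp0 hdp h

private theorem aux_good_nc (d : ℕ) (E : IntermediateField K (AlgebraicClosure K))
    [FiniteDimensional K ↥E] (hd : Module.finrank K ↥E ≤ d) :
    GoodAux K d (AlgebraicClosure K) (normalClosure K ↥E (AlgebraicClosure K)) := by
  have hcard := aux_nc_card d E hd
  refine ⟨inferInstance, inferInstance, Group.exponent_dvd_nat_card.trans hcard, ?_⟩
  intro p pp hdp hdvd
  have hpf : p ∣ d.factorial := hdvd.trans hcard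
  exact absurd ((Nat.Prime.dvd_factorial pp).mp hpf) (not_le.mpr hdp)

private theorem aux_transfer (d : ℕ) (M N : IntermediateField K (AlgebraicClosure K))
    (hMN : M ≤ N) [Normal K ↥M] (hN : GoodAux K d (AlgebraicClosure K) N) :
    Monoid.exponent (↥M ≃ₐ[K] ↥M) ∣ Nat.factorial d ∧
      ∀ p : ℕ, p.Prime → d < p → ¬ p ∣ Nat.card (↥M ≃ₐ[K] ↥M) := by
  obtain ⟨hfdN, hnN, heN, hpN⟩ := hN
  haveI := hfdN; haveI := hnN
  letI : Algebra ↥M ↥N := (IntermediateField.inclusion hMN).toAlgebra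
  haveI : IsScalarTower K ↥M ↥N :=
    IsScalarTower.of_algebraMap_eq (R := K) (S := ↥M) (A := ↥N) fun x => Subtype.ext rfl
  have hsurj : Function.Surjective
      (AlgEquiv.restrictNormalHom (F := K) (K₁ := ↥N) ↥M) :=
    AlgEquiv.restrictNormalHom_surjective ↥N
  constructor
  · exact (MonoidHom.exponent_dvd hsurj).trans heN
  · intro p hp hdp hdvd
    exact hpN p hp hdp (hdvd.trans (Subgroup.card_dvd_of_surjective _ hsurj))

end Aux

/-- if `K₁` and `K₂` are finite Galois extensions of `K` inside a fixed bigger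
field, then `σ ↦ (σ|_{K₁}, σ|_{K₂})` is an injective group homomorphism from
`Gal(K₁K₂/K)` into `Gal(K₁/K) × Gal(K₂/K)`.  Consequently, if `M/K` is a finite Galois
extension contained in the compositum `K^{(d)}` of all extensions of `K` of degree at most
`d`, then the exponent of `Gal(M/K)` divides `d!` and no prime `p > d` divides the order of
`Gal(M/K)`. -/
theorem galois_compositum_restriction (K : Type*) [Field K] (d : ℕ) :
    (∀ (L : Type*) [Field L] [Algebra K L] (K₁ K₂ : IntermediateField K L)
      [FiniteDimensional K ↥K₁] [FiniteDimensional K ↥K₂] [Normal K ↥K₁] [Normal K ↥K₂],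
      ∃ φ : (↥(K₁ ⊔ K₂) ≃ₐ[K] ↥(K₁ ⊔ K₂)) →* (↥K₁ ≃ₐ[K] ↥K₁) × (↥K₂ ≃ₐ[K] ↥K₂),
        Function.Injective φ ∧
        (∀ (σ : ↥(K₁ ⊔ K₂) ≃ₐ[K] ↥(K₁ ⊔ K₂)) (x : ↥K₁),
          ((((φ σ).1 x : ↥K₁) : L) =
            ((σ (IntermediateField.inclusion le_sup_left x) : ↥(K₁ ⊔ K₂)) : L))) ∧
        (∀ (σ : ↥(K₁ ⊔ K₂) ≃ₐ[K] ↥(K₁ ⊔ K₂)) (x : ↥K₂),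
          ((((φ σ).2 x : ↥K₂) : L) =
            ((σ (IntermediateField.inclusion le_sup_right x) : ↥(K₁ ⊔ K₂)) : L)))) ∧
    (∀ (M : IntermediateField K (AlgebraicClosure K)) [FiniteDimensional K ↥M]
      [IsGalois K ↥M], M ≤ compositumDeg' K d →
        Monoid.exponent (↥M ≃ₐ[K] ↥M) ∣ Nat.factorial d ∧
        ∀ p : ℕ, p.Prime → d < p → ¬ p ∣ Nat.card (↥M ≃ₐ[K] ↥M)) := by
  classical
  constructor
  · intro L _ _ K₁ K₂ _ _ _ _
    exact aux_restrict L K₁ K₂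
  · intro M _ _ hM
    haveI : Normal K ↥M := inferInstance
    -- abbreviations
    set AC := AlgebraicClosure K with hAC
    set SS := {E : IntermediateField K AC |
      FiniteDimensional K ↥E ∧ Module.finrank K ↥E ≤ d} with hSS
    -- `M` is generated by finitely many elements
    obtain ⟨t, htM, hMt⟩ : ∃ t : Finset AC, (↑t : Set AC) ⊆ (M : Set AC) ∧
        M ≤ IntermediateField.adjoin K (↑t : Set AC) := by
      let b := Module.finBasis K ↥M
      refine ⟨Finset.univ.image (fun i => ((b i : ↥M) : AC)), ?_, ?_⟩
      · intro x hx
        simp only [Finset.coe_image, Set.mem_image] at hx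
        obtain ⟨i, -, rfl⟩ := hx
        exact (b i).2
      · intro x hx
        have hx1 : x ∈ Submodule.map M.val.toLinearMap (Submodule.span K (Set.range b)) :=
          ⟨⟨x, hx⟩, by rw [b.span_eq]; trivial, rfl⟩
        rw [Submodule.map_span] at hx1
        have hsub : (M.val.toLinearMap '' Set.range b : Set AC) ⊆
            (Subalgebra.toSubmodule (IntermediateField.adjoin K
              ((Finset.univ.image (fun i => ((b i : ↥M) : AC)) : Finset AC) : Set AC)).toSubalgebra :
              Set AC) := by
          rintro y ⟨z, ⟨i, rfl⟩, rfl⟩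
          exact IntermediateField.subset_adjoin _ _
            (by simp only [Finset.coe_image, Set.mem_image]; exact ⟨i, by simp, rfl⟩)
        exact Submodule.span_le.mpr hsub hx1
    -- each generator lies in a finite sub-compositum
    have hcomp : compositumDeg' K d = ⨆ i : {E : IntermediateField K AC // E ∈ SS},
        (i : IntermediateField K AC) := by
      rw [compositumDeg', ← hSS]
      exact (iSup_subtype'' SS fun E => E).symm
    have hchoice : ∀ y ∈ t, ∃ s : Finset {E : IntermediateField K AC // E ∈ SS},
        y ∈ ⨆ i ∈ s, (i : IntermediateField K AC) := by
      intro y hy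
      have hyM : y ∈ M := htM hy
      have : y ∈ ⨆ i : {E : IntermediateField K AC // E ∈ SS},
          (i : IntermediateField K AC) := by
        rw [← hcomp]; exact hM hyM
      exact IntermediateField.exists_finset_of_mem_iSup this
    choose! s hs using hchoice
    let sAll : Finset {E : IntermediateField K AC // E ∈ SS} := t.attach.biUnion fun y => s y.1
    have hMsup : M ≤ ⨆ i ∈ sAll, (i : IntermediateField K AC) := by
      refine le_trans hMt (IntermediateField.adjoin_le_iff.mpr ?_)
      intro y hy
      have h1 := hs y hy
      have h2 : (⨆ i ∈ s y, (i : IntermediateField K AC)) ≤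
          ⨆ i ∈ sAll, (i : IntermediateField K AC) := by
        refine biSup_mono fun i hi => ?_
        exact Finset.mem_biUnion.mpr ⟨⟨y, hy⟩, Finset.mem_attach _ _, hi⟩
      exact h2 h1
    -- the normal closure compositum
    let nc : {E : IntermediateField K AC // E ∈ SS} → IntermediateField K AC :=
      fun i => IntermediateField.normalClosure K ↥(i : IntermediateField K AC) AC
    have hgood : ∀ u : Finset {E : IntermediateField K AC // E ∈ SS},
        GoodAux K d AC (⨆ i ∈ u, nc i) := by
      intro u
      induction u using Finset.induction_on with
      | empty => simpa using aux_good_bot (K := K) d (AlgebraicClosure K)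
      | @insert a u ha ih =>
        rw [Finset.iSup_insert]
        haveI : FiniteDimensional K ↥(a : IntermediateField K AC) := a.2.1
        exact aux_good_sup d AC _ _ (aux_good_nc d _ a.2.2) ih
    have hMN : M ≤ ⨆ i ∈ sAll, nc i :=
      le_trans hMsup (iSup₂_mono fun i _ => IntermediateField.le_normalClosure _)
    exact aux_transfer d M _ hMN (hgood sAll)
end
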